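/- Wronskian criterion for linear dependence: let k ≥ 1 and h₁, …, h_k be formal power series over ℂ. The Wronskian W(h₁,…,h_k), the determinant of the k×k matrix whose (i,j) entry is the (i−1)-st formal derivative of h_j, is the zero power series if and only if h₁, …, h_k are linearly dependent over ℂ. -/

import Mathlib

open PowerSeries

/-- The Wronskian of `k` formal power series: the determinant of the `k × k` 
matrix whose `(i,j)` entry is the `i`-th formal derivative of `h j`. -/
noncomputable def psWronskian {k : ℕ} (h : Fin k → PowerSeries ℂ) : PowerSeries ℂ :=
  Matrix.det (Matrix.of fun i j : Fin k => (⇑(PowerSeries.derivative ℂ))^[(i : ℕ)] (h j))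

section WronskianAux

open Finset Matrix

lemma coeff_iterate_derivative (f : PowerSeries ℂ) (i m : ℕ) :
    (coeff m) ((⇑(PowerSeries.derivative ℂ))^[i] f)
      = ((m + i).descFactorial i : ℂ) * coeff (m + i) f := by
  induction i generalizing f with
  | zero => simp
  | succ i ih =>
    rw [Function.iterate_succ_apply, ih, coeff_derivative]
    rw [show m + (i+1) = (m + i) + 1 by ring, Nat.succ_descFactorial_succ]
    push_cast
    ring

lemma iter_deriv_sum {n : ℕ} (i : ℕ) (c : Fin n → ℂ) (f : Fin n → PowerSeries ℂ) :
    (⇑(PowerSeries.derivative ℂ))^[i] (∑ l, c l • f l)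
      = ∑ l, c l • (⇑(PowerSeries.derivative ℂ))^[i] (f l) := by
  induction i with
  | zero => simp
  | succ i ih =>
    have key : ∀ (g : Fin n → PowerSeries ℂ),
        PowerSeries.derivative ℂ (∑ l, c l • g l) = ∑ l, c l • PowerSeries.derivative ℂ (g l) := by
      intro g
      rw [← Derivation.coeFn_coe, map_sum]
      simp
    rw [Function.iterate_succ_apply', ih, key]
    simp [Function.iterate_succ_apply']


lemma psWronskian_transform {k : ℕ} (A : Matrix (Fin k) (Fin k) ℂ) (h : Fin k → PowerSeries ℂ) :
    psWronskian (fun j => ∑ l, A j l • h l) = psWronskian h * C A.det := by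
  unfold psWronskian
  beta_reduce
  have hm : (Matrix.of fun i j : Fin k => (⇑(PowerSeries.derivative ℂ))^[(i : ℕ)] (∑ l, A j l • h l))
      = (Matrix.of fun i j : Fin k => (⇑(PowerSeries.derivative ℂ))^[(i : ℕ)] (h j))
          * (A.map (C (R := ℂ)))ᵀ := by
    refine Matrix.ext fun i j => ?_
    simp only [Matrix.mul_apply, Matrix.of_apply, Matrix.transpose_apply, Matrix.map_apply]
    rw [iter_deriv_sum]
    exact Finset.sum_congr rfl fun l _ => by rw [smul_eq_C_mul, mul_comm]
  rw [hm, Matrix.det_mul, Matrix.det_transpose]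
  congr 1
  exact (RingHom.map_det (C (R := ℂ)) A).symm

lemma dep_implies_wronskian_zero {k : ℕ} (h : Fin k → PowerSeries ℂ)
    (hdep : ¬ LinearIndependent ℂ h) : psWronskian h = 0 := by
  obtain ⟨g, hsum, i, hgi⟩ := Fintype.not_linearIndependent_iff.mp hdep
  apply Matrix.exists_mulVec_eq_zero_iff.mp
  refine ⟨fun j => C (g j), ?_, ?_⟩
  · intro hv
    exact hgi (by simpa using congrFun hv i)
  · funext r
    have : ∀ j : Fin k, (Matrix.of fun i j : Fin k =>
        (⇑(PowerSeries.derivative ℂ))^[(i : ℕ)] (h j)) r j * C (g j)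
        = g j • (⇑(PowerSeries.derivative ℂ))^[(r : ℕ)] (h j) := by
      intro j; simp [smul_eq_C_mul, mul_comm]
    simp only [Matrix.mulVec, dotProduct, Pi.zero_apply]
    simp only [this]
    rw [← iter_deriv_sum, hsum]
    simp

lemma fin_le_of_strictMono {k : ℕ} {d : Fin k → ℕ} (hd : StrictMono d) :
    ∀ j : Fin k, (j : ℕ) ≤ d j := by
  have H : ∀ m : ℕ, ∀ j : Fin k, (j : ℕ) = m → m ≤ d j := by
    intro m
    induction m with
    | zero => intro j _; exact Nat.zero_le _
    | succ m ih =>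
      intro j hj
      have hm : m < k := lt_trans (hj ▸ Nat.lt_succ_self m) j.isLt
      have hlt : (⟨m, hm⟩ : Fin k) < j := by
        simp only [Fin.lt_def, hj]; exact Nat.lt_succ_self m
      have := ih ⟨m, hm⟩ rfl
      have := hd hlt
      omega
  exact fun j => H (j : ℕ) j rfl

lemma psWronskian_ne_zero_of_orders {k : ℕ} (g : Fin k → PowerSeries ℂ) (d : Fin k → ℕ)
    (hd : StrictMono d)
    (hlead : ∀ j, coeff (d j) (g j) ≠ 0)
    (hlow : ∀ j m, m < d j → coeff m (g j) = 0) :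
    psWronskian g ≠ 0 := by
  have hsum_le : ∑ i : Fin k, (i : ℕ) ≤ ∑ i, d i :=
    Finset.sum_le_sum fun i _ => fin_le_of_strictMono hd i
  set N := (∑ i, d i) - ∑ i : Fin k, (i : ℕ) with hN
  have hNadd : N + ∑ i : Fin k, (i : ℕ) = ∑ i, d i := Nat.sub_add_cancel hsum_le
  -- key computation per permutation
  have key : ∀ σ : Equiv.Perm (Fin k),
      coeff N (∏ i, (⇑(PowerSeries.derivative ℂ))^[(σ i : ℕ)] (g i))
        = ∏ i, (((d i).descFactorial (σ i) : ℂ) * coeff (d i) (g i)) := by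
    intro σ
    have hperm : ∑ i, ((σ i : ℕ)) = ∑ i : Fin k, (i : ℕ) := Equiv.sum_comp σ (fun i => (i : ℕ))
    rw [PowerSeries.coeff_prod]
    have hvanish : ∀ l : Fin k →₀ ℕ, l ∈ finsuppAntidiag univ N →
        (¬ ∀ i, l i + (σ i : ℕ) = d i) → ∏ i, coeff (l i) ((⇑(PowerSeries.derivative ℂ))^[(σ i : ℕ)] (g i)) = 0 := by
      intro l hl hne
      have hlsum : ∑ i, l i = N := by
        rw [Finset.mem_finsuppAntidiag] at hl
        exact hl.1
      have : ∃ i, l i + (σ i : ℕ) < d i := by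
        by_contra hc
        push_neg at hc
        have hsumeq : ∑ i, (l i + (σ i : ℕ)) = ∑ i, d i := by
          rw [Finset.sum_add_distrib, hlsum, hperm, hNadd]
        have := (Finset.sum_eq_sum_iff_of_le (fun i _ => hc i)).mp hsumeq.symm
        exact hne fun i => ((this i (Finset.mem_univ i)).symm)
      obtain ⟨i, hi⟩ := this
      apply Finset.prod_eq_zero (Finset.mem_univ i)
      rw [coeff_iterate_derivative, hlow i _ hi, mul_zero]
    by_cases H : ∀ i, (σ i : ℕ) ≤ d i
    · set l₀ : Fin k →₀ ℕ := Finsupp.equivFunOnFinite.symm (fun i => d i - (σ i : ℕ)) with hl₀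
      have hl₀app : ∀ i, l₀ i = d i - (σ i : ℕ) := fun i => rfl
      have hl₀mem : l₀ ∈ finsuppAntidiag univ N := by
        rw [Finset.mem_finsuppAntidiag]
        refine ⟨?_, Finset.subset_univ _⟩
        have : ∑ i, l₀ i = ∑ i, (d i - (σ i : ℕ)) := Finset.sum_congr rfl fun i _ => hl₀app i
        rw [this, Finset.sum_tsub_distrib _ (fun i _ => H i), hperm]
      rw [Finset.sum_eq_single l₀]
      · refine Finset.prod_congr rfl fun i _ => ?_
        rw [hl₀app, coeff_iterate_derivative, Nat.sub_add_cancel (H i)]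
      · intro l hl hne
        apply hvanish l hl
        intro hall
        apply hne
        ext i
        have := hall i
        rw [hl₀app]
        omega
      · intro habs
        exact absurd hl₀mem habs
    · push_neg at H
      obtain ⟨i₀, hi₀⟩ := H
      rw [Finset.sum_eq_zero]
      · rw [Finset.prod_eq_zero (Finset.mem_univ i₀)]
        rw [Nat.descFactorial_eq_zero_iff_lt.mpr hi₀]
        push_cast
        rw [zero_mul]
      · intro l hl
        apply hvanish l hl
        intro hall
        have := hall i₀
        omega
  intro h0
  have hcoeff : coeff N (psWronskian g) = 0 := by rw [h0, map_zero]
  apply absurd hcoeff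
  rw [psWronskian, Matrix.det_apply]
  rw [map_sum]
  have : ∀ σ : Equiv.Perm (Fin k),
      coeff N (Equiv.Perm.sign σ • ∏ i, (Matrix.of fun i j : Fin k =>
          (⇑(PowerSeries.derivative ℂ))^[(i : ℕ)] (g j)) (σ i) i)
        = Equiv.Perm.sign σ • ((∏ i, ((d i).descFactorial (σ i) : ℂ)) * ∏ i, coeff (d i) (g i)) := by
    intro σ
    rw [Units.smul_def, Units.smul_def, map_zsmul]
    congr 1
    simp only [Matrix.of_apply]
    rw [key σ, Finset.prod_mul_distrib]
  rw [Finset.sum_congr rfl fun σ _ => this σ]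
  have hfac : ∀ σ : Equiv.Perm (Fin k),
      Equiv.Perm.sign σ • ((∏ i, ((d i).descFactorial (σ i) : ℂ)) * ∏ i, coeff (d i) (g i))
        = (Equiv.Perm.sign σ • ∏ i, ((d i).descFactorial (σ i) : ℂ)) * ∏ i, coeff (d i) (g i) := by
    intro σ
    rw [Units.smul_def, Units.smul_def, zsmul_eq_mul, zsmul_eq_mul, mul_assoc]
  rw [Finset.sum_congr rfl fun σ _ => hfac σ, ← Finset.sum_mul]
  have hdetB : (∑ σ : Equiv.Perm (Fin k), Equiv.Perm.sign σ • ∏ i, ((d i).descFactorial (σ i) : ℂ))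
      = (Matrix.of fun a b : Fin k => (((d b).descFactorial (a : ℕ)) : ℂ)).det := by
    rw [Matrix.det_apply]
    rfl
  have hB : (Matrix.of fun a b : Fin k => (((d b).descFactorial (a : ℕ)) : ℂ)).det ≠ 0 := by
    have hBt : (Matrix.of fun a b : Fin k => (((d b).descFactorial (a : ℕ)) : ℂ))
        = (Matrix.of fun i j : Fin k => ((descPochhammer ℂ (j : ℕ)).eval ((d i : ℂ))))ᵀ := by
      refine Matrix.ext fun a b => ?_
      simp only [Matrix.of_apply, Matrix.transpose_apply]
      rw [descPochhammer_eval_eq_descFactorial]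
    rw [hBt, Matrix.det_transpose,
      ← Matrix.det_eval_matrixOfPolynomials_eq_det_vandermonde (fun i : Fin k => ((d i : ℂ)))
        (fun j : Fin k => descPochhammer ℂ (j : ℕ))
        (fun j => descPochhammer_natDegree _ _)
        (fun j => monic_descPochhammer _ _)]
    rw [Ne, Matrix.det_vandermonde_eq_zero_iff]
    rintro ⟨i, j, hij, hne⟩
    exact hne (hd.injective (Nat.cast_injective hij))
  rw [hdetB]
  exact mul_ne_zero hB (Finset.prod_ne_zero_iff.mpr fun i _ => hlead i)

lemma indep_sub_smul {k : ℕ} {x : PowerSeries ℂ} {t : Fin k → PowerSeries ℂ}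
    (hli : LinearIndependent ℂ (Fin.cons x t : Fin (k+1) → PowerSeries ℂ)) (r : Fin k → ℂ) :
    LinearIndependent ℂ (fun j => t j - r j • x) := by
  rw [Fintype.linearIndependent_iff] at hli ⊢
  intro b hb j
  have hb' : ∑ j, (b j • t j - (b j * r j) • x) = 0 := by
    simpa [smul_sub, mul_smul] using hb
  rw [Finset.sum_sub_distrib, sub_eq_zero, ← Finset.sum_smul] at hb'
  have hsum : ∑ i : Fin (k+1),
      (Fin.cons (-(∑ j, b j * r j)) b : Fin (k+1) → ℂ) i
        • (Fin.cons x t : Fin (k+1) → PowerSeries ℂ) i = 0 := by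
    rw [Fin.sum_univ_succ]
    simp only [Fin.cons_zero, Fin.cons_succ]
    rw [hb', neg_smul, neg_add_cancel]
  have := hli _ hsum j.succ
  simpa using this

lemma indep_cons_of_indep {k : ℕ} (h : Fin (k+1) → PowerSeries ℂ)
    (hli : LinearIndependent ℂ h) (j₀ : Fin (k+1)) :
    LinearIndependent ℂ
      (Fin.cons (h j₀) (fun j => h (j₀.succAbove j)) : Fin (k+1) → PowerSeries ℂ) := by
  have heq : (Fin.cons (h j₀) (fun j => h (j₀.succAbove j)) : Fin (k+1) → PowerSeries ℂ)
      = h ∘ (Fin.cons j₀ j₀.succAbove : Fin (k+1) → Fin (k+1)) := by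
    funext i
    induction i using Fin.cases with
    | zero => simp
    | succ j => simp
  rw [heq]
  apply hli.comp
  intro a b hab
  induction a using Fin.cases with
  | zero =>
    induction b using Fin.cases with
    | zero => rfl
    | succ j =>
      simp only [Fin.cons_zero, Fin.cons_succ] at hab
      exact absurd hab.symm (Fin.succAbove_ne j₀ j)
  | succ i =>
    induction b using Fin.cases with
    | zero =>
      simp only [Fin.cons_zero, Fin.cons_succ] at hab
      exact absurd hab (Fin.succAbove_ne j₀ i)
    | succ j =>
      simp only [Fin.cons_succ] at hab
      rw [Fin.succAbove_right_injective.eq_iff] at hab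
      rw [hab]

lemma echelon : ∀ (k : ℕ) (h : Fin k → PowerSeries ℂ), LinearIndependent ℂ h →
    ∃ (A : Matrix (Fin k) (Fin k) ℂ) (d : Fin k → ℕ), StrictMono d ∧
      (∀ j, coeff (d j) (∑ l, A j l • h l) ≠ 0) ∧
      (∀ j m, m < d j → coeff m (∑ l, A j l • h l) = 0) := by
  intro k
  induction k with
  | zero =>
    intro h _
    exact ⟨0, fun j => 0, fun a => a.elim0, fun j => j.elim0, fun j => j.elim0⟩
  | succ k ih =>
    intro h hli
    have hne : ∀ j, h j ≠ 0 := fun j => hli.ne_zero j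
    have hex : ∀ j : Fin (k+1), ∃ n, coeff n (h j) ≠ 0 := by
      intro j
      by_contra hc
      push_neg at hc
      exact hne j (PowerSeries.ext fun n => by rw [hc n, map_zero])
    obtain ⟨j₀, -, hj₀min⟩ := Finset.exists_min_image Finset.univ (fun j => Nat.find (hex j))
      ⟨0, Finset.mem_univ 0⟩
    set dm := Nat.find (hex j₀) with hdm
    have hc₀ : coeff dm (h j₀) ≠ 0 := Nat.find_spec (hex j₀)
    have hlowall : ∀ (j : Fin (k+1)) m, m < dm → coeff m (h j) = 0 := by
      intro j m hm
      have hm' : m < Nat.find (hex j) := lt_of_lt_of_le hm (hj₀min j (Finset.mem_univ j))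
      have := Nat.find_min (hex j) hm'
      simpa using this
    set t : Fin k → PowerSeries ℂ := fun j => h (j₀.succAbove j) with ht
    set r : Fin k → ℂ := fun j => coeff dm (t j) / coeff dm (h j₀) with hr
    set h' : Fin k → PowerSeries ℂ := fun j => t j - r j • h j₀ with hh'
    have h'li : LinearIndependent ℂ h' := indep_sub_smul (indep_cons_of_indep h hli j₀) r
    have h'low : ∀ (j : Fin k) m, m ≤ dm → coeff m (h' j) = 0 := by
      intro j m hm
      rcases lt_or_eq_of_le hm with hlt | heq
      · rw [hh']
        simp only [map_sub, LinearMap.map_smul]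
        rw [hlowall _ _ hlt, hlowall _ _ hlt]
        simp
      · subst heq
        rw [hh']
        simp only [map_sub, LinearMap.map_smul]
        rw [hr]
        simp only [smul_eq_mul]
        rw [div_mul_cancel₀ _ hc₀, sub_self]
    obtain ⟨A', d', hd'mono, hd'lead, hd'low⟩ := ih h' h'li
    have hgt : ∀ j, dm < d' j := by
      intro j
      by_contra hc
      push_neg at hc
      apply hd'lead j
      rw [map_sum]
      apply Finset.sum_eq_zero
      intro l _
      rw [LinearMap.map_smul, h'low l _ hc]
      simp
    -- assemble
    set row0 : Fin (k+1) → ℂ := fun i => if i = j₀ then 1 else 0 with hrow0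
    set rowsucc : Fin k → Fin (k+1) → ℂ := fun j i =>
      (if i = j₀ then -(∑ l, A' j l * r l) else 0)
        + ∑ l, A' j l * (if i = j₀.succAbove l then 1 else 0) with hrowsucc
    set A : Matrix (Fin (k+1)) (Fin (k+1)) ℂ := Matrix.of (Fin.cons row0 rowsucc) with hA
    have hrow0sum : ∑ l, A 0 l • h l = h j₀ := by
      rw [hA]
      simp only [Matrix.of_apply, Fin.cons_zero, hrow0]
      have hsplit : ∀ i, (if i = j₀ then (1:ℂ) else 0) • h i = if i = j₀ then h i else 0 :=
        fun i => by split_ifs <;> simp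
      rw [Finset.sum_congr rfl fun i _ => hsplit i, Finset.sum_ite_eq' Finset.univ j₀ h]
      simp
    have hrowsuccsum : ∀ j : Fin k, ∑ l, A (Fin.succ j) l • h l = ∑ l, A' j l • h' l := by
      intro j
      rw [hA]
      simp only [Matrix.of_apply, Fin.cons_succ, hrowsucc]
      rw [Finset.sum_congr rfl (fun i _ => add_smul _ _ (h i)), Finset.sum_add_distrib]
      have h1 : ∑ i : Fin (k+1), (if i = j₀ then -(∑ l, A' j l * r l) else 0) • h i
          = -(∑ l, A' j l * r l) • h j₀ := by
        have hsplit : ∀ i : Fin (k+1), (if i = j₀ then -(∑ l, A' j l * r l) else 0) • h i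
            = if i = j₀ then -(∑ l, A' j l * r l) • h i else 0 := fun i => by split_ifs <;> simp
        rw [Finset.sum_congr rfl fun i _ => hsplit i,
          Finset.sum_ite_eq' Finset.univ j₀ (fun i => -(∑ l, A' j l * r l) • h i)]
        simp
      have h2 : ∑ i : Fin (k+1), (∑ l, A' j l * (if i = j₀.succAbove l then 1 else 0)) • h i
          = ∑ l, A' j l • t l := by
        simp only [Finset.sum_smul]
        rw [Finset.sum_comm]
        refine Finset.sum_congr rfl fun l _ => ?_
        have : ∀ i : Fin (k+1), (A' j l * (if i = j₀.succAbove l then 1 else 0)) • h i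
            = if i = j₀.succAbove l then A' j l • h i else 0 := by
          intro i
          by_cases hi : i = j₀.succAbove l <;> simp [hi]
        rw [Finset.sum_congr rfl (fun i _ => this i)]
        rw [Finset.sum_ite_eq' Finset.univ (j₀.succAbove l) (fun i => A' j l • h i)]
        simp [ht]
      rw [h1, h2]
      rw [hh']
      have : ∀ l : Fin k, A' j l • (t l - r l • h j₀)
          = A' j l • t l - (A' j l * r l) • h j₀ := by
        intro l
        rw [smul_sub, mul_smul]
      rw [Finset.sum_congr rfl fun l _ => this l, Finset.sum_sub_distrib, ← Finset.sum_smul,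
        neg_smul]
      abel
    refine ⟨A, Fin.cons dm d', ?_, ?_, ?_⟩
    · intro a b hab
      induction b using Fin.cases with
      | zero => exact absurd hab (not_lt.mpr (Fin.zero_le a))
      | succ j =>
        induction a using Fin.cases with
        | zero => simpa using hgt j
        | succ i =>
          simp only [Fin.cons_succ]
          exact hd'mono (by rwa [Fin.succ_lt_succ_iff] at hab)
    · intro j
      induction j using Fin.cases with
      | zero =>
        rw [hrow0sum]
        simpa using hc₀
      | succ j =>
        rw [hrowsuccsum j]
        simpa using hd'lead j
    · intro j m hm
      induction j using Fin.cases with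
      | zero =>
        rw [hrow0sum]
        exact hlowall j₀ m (by simpa using hm)
      | succ j =>
        rw [hrowsuccsum j]
        exact hd'low j m (by simpa using hm)

end WronskianAux

/-- Wronskian criterion for linear dependence: the Wronskian of `h₁, …, h_k` 
vanishes identically if and only if `h₁, …, h_k` are linearly dependent over `ℂ`. -/
theorem wronskian_eq_zero_iff_linearDependent (k : ℕ) (hk : 1 ≤ k)
    (h : Fin k → PowerSeries ℂ) :
    psWronskian h = 0 ↔ ¬ LinearIndependent ℂ h := by
  constructor
  · intro h0 hli
    obtain ⟨A, d, hd, hlead, hlow⟩ := echelon k h hli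
    have hne := psWronskian_ne_zero_of_orders (fun j => ∑ l, A j l • h l) d hd hlead hlow
    rw [psWronskian_transform, h0, zero_mul] at hne
    exact hne rfl
  · exact dep_implies_wronskian_zero h
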